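/- Let F be a Schwartz function on ℍⁿ × ℝ and L a positive integer. There is a constant C, depending only on L, n and finitely many Schwartz seminorms of F, such that whenever |(z',u')| ≤ (1/(2γ))(1+|(z,u)|) and |r'| ≥ (1/2)(1+|r|), one has |F((z,u)∘(z',u')⁻¹, r−r') − F((z,u), r−r') − F((z,u)∘(z',u')⁻¹, r) + F((z,u), r)| ≤ C |(z',u')| (1+|(z,u)|)^{−(L+2n+2)} · [(1+|r−r'|)^{−(L+1)} + (1+|r|)^{−(L+1)}]. -/

import Mathlib

open MeasureTheory Complex SchwartzMap Filter
open scoped BigOperators ComplexConjugate FourierTransform ENNReal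

noncomputable section

/-- The underlying space of the Heisenberg group ℍⁿ ≅ ℂⁿ × ℝ. -/
abbrev H (n : ℕ) := (Fin n → ℂ) × ℝ

/-- Heisenberg group multiplication: (z,t)∘(z',t') = (z+z', t+t'+2 Im(z·conj z')). -/
def Hmul {n : ℕ} (x y : H n) : H n :=
  (x.1 + y.1, x.2 + y.2 + 2 * (∑ j, x.1 j * conj (y.1 j)).im)

/-- Heisenberg group inverse: (z,t)⁻¹ = (-z,-t). -/
def Hinv {n : ℕ} (x : H n) : H n := (-x.1, -x.2)

/-- Homogeneous norm |(z,t)| = (|z|² + |t|)^{1/2}. -/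
def Hnorm {n : ℕ} (x : H n) : ℝ := Real.sqrt ((∑ j, Complex.normSq (x.1 j)) + |x.2|)

/-- Convolution on ℍⁿ : (f∗g)(x) = ∫ f(x∘y⁻¹) g(y) dy. -/
def Hconv {n : ℕ} (f g : H n → ℝ) (x : H n) : ℝ := ∫ y, f (Hmul x (Hinv y)) * g y

/-- Partial convolution in the central variable: (f ∗₂ h)(z,u) = ∫ f(z,u−v) h(v) dv. -/
def conv2 {n : ℕ} (f : H n → ℝ) (h : ℝ → ℝ) (x : H n) : ℝ := ∫ v, f (x.1, x.2 - v) * h v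

/-- Ordinary convolution on ℝ. -/
def convR (h k : ℝ → ℝ) (x : ℝ) : ℝ := ∫ v, h (x - v) * k v

/-- Convolution on the direct product group ℍⁿ × ℝ. -/
def PConv {n : ℕ} (F G : H n × ℝ → ℝ) (p : H n × ℝ) : ℝ :=
  ∫ q : H n × ℝ, F (Hmul p.1 (Hinv q.1), p.2 - q.2) * G q

/-- The projection π : (πF)(z,u) = ∫ F((z,u−v),v) dv. -/
def piProj {n : ℕ} (F : H n × ℝ → ℝ) (x : H n) : ℝ := ∫ v, F ((x.1, x.2 - v), v)

/-- Nonisotropic dilation ψ_s(z,u) = s^{−2n−2} ψ(z/s, u/s²). -/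
def dil1 {n : ℕ} (ψ : H n → ℝ) (s : ℝ) (x : H n) : ℝ :=
  (s ^ (2 * n + 2))⁻¹ * ψ ((s : ℂ)⁻¹ • x.1, x.2 / s ^ 2)

/-- Dilation on ℝ: η_t(v) = t⁻¹ η(v/t). -/
def dil2 (η : ℝ → ℝ) (t : ℝ) (v : ℝ) : ℝ := t⁻¹ * η (v / t)

/-- All moments of a function on ℝ vanish. -/
def momentsVanishR (η : ℝ → ℝ) : Prop := ∀ γ : ℕ, ∫ v : ℝ, v ^ γ * η v = 0

/-- All moments of a function on ℍⁿ vanish. -/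
def momentsVanishH {n : ℕ} (ψ : H n → ℝ) : Prop :=
  ∀ (α β : Fin n → ℕ) (γ : ℕ),
    ∫ x : H n, (∏ j, ((x.1 j).re ^ α j * (x.1 j).im ^ β j)) * x.2 ^ γ * ψ x = 0

/-- A function on ℍⁿ is radial in the ℂⁿ-variable. -/
def HRadial {n : ℕ} (ψ : H n → ℝ) : Prop :=
  ∀ (z z' : Fin n → ℂ) (u : ℝ),
    (∑ j, Complex.normSq (z j)) = (∑ j, Complex.normSq (z' j)) → ψ (z, u) = ψ (z', u)

/-- The product moment conditions defining S_∞(ℍⁿ × ℝ). -/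
def SInf {n : ℕ} (F : H n × ℝ → ℝ) : Prop :=
  (∀ (α β : Fin n → ℕ) (γ : ℕ) (v : ℝ),
    ∫ x : H n, (∏ j, ((x.1 j).re ^ α j * (x.1 j).im ^ β j)) * x.2 ^ γ * F (x, v) = 0) ∧
  (∀ (γ : ℕ) (x : H n), ∫ v : ℝ, v ^ γ * F (x, v) = 0)

/-- The flag component function ψ_{s,t} = ψ^{(1)}_s ∗₂ ψ^{(2)}_t. -/
def psist {n : ℕ} (ψa : H n → ℝ) (ψb : ℝ → ℝ) (s t : ℝ) : H n → ℝ :=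
  conv2 (dil1 ψa s) (dil2 ψb t)

/-- The product kernel Ψ_{s,t}((z,u),r) = ψ^{(1)}_s(z,u) ψ^{(2)}_t(r) on ℍⁿ × ℝ. -/
def PsiST {n : ℕ} (ψa : H n → ℝ) (ψb : ℝ → ℝ) (s t : ℝ) : H n × ℝ → ℝ :=
  fun p => dil1 ψa s p.1 * dil2 ψb t p.2




lemma Hnorm_nonneg {n : ℕ} (x : H n) : 0 ≤ Hnorm x := Real.sqrt_nonneg _

lemma sum_normSq_nonneg {n : ℕ} (z : Fin n → ℂ) : 0 ≤ ∑ j, Complex.normSq (z j) :=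
  Finset.sum_nonneg fun j _ => Complex.normSq_nonneg _

lemma Hnorm_sq {n : ℕ} (x : H n) : Hnorm x ^ 2 = (∑ j, Complex.normSq (x.1 j)) + |x.2| := by
  rw [Hnorm, Real.sq_sqrt]
  exact add_nonneg (sum_normSq_nonneg _) (abs_nonneg _)

lemma Hmul_inv_cancel {n : ℕ} (x y : H n) : Hmul (Hmul x (Hinv y)) y = x := by
  unfold Hmul Hinv
  have h1 : ∑ j, (x.1 j * conj ((-y.1) j)) = -∑ j, x.1 j * conj (y.1 j) := by
    simp [mul_neg]
  have h2 : ∑ j, ((x.1 + -y.1) j * conj (y.1 j))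
      = (∑ j, x.1 j * conj (y.1 j)) - ∑ j, (y.1 j * conj (y.1 j)) := by
    rw [← Finset.sum_sub_distrib]
    refine Finset.sum_congr rfl fun j _ => ?_
    simp only [Pi.add_apply, Pi.neg_apply]; ring
  have h3 : (∑ j, (y.1 j * conj (y.1 j))).im = 0 := by
    have : ∑ j, (y.1 j * conj (y.1 j)) = ((∑ j, Complex.normSq (y.1 j) : ℝ) : ℂ) := by
      push_cast
      exact Finset.sum_congr rfl fun j _ => Complex.mul_conj _
    rw [this, Complex.ofReal_im]
  ext1
  · simp
  · simp only [h1, h2, Complex.sub_im, Complex.neg_im]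
    rw [h3]
    ring

lemma norm_fst_le_Hnorm {n : ℕ} (x : H n) : ‖x.1‖ ≤ Hnorm x := by
  rw [pi_norm_le_iff_of_nonneg (Hnorm_nonneg x)]
  intro j
  rw [Complex.norm_def, Hnorm]
  apply Real.sqrt_le_sqrt
  have h := Finset.single_le_sum (f := fun j => Complex.normSq (x.1 j))
    (fun i _ => Complex.normSq_nonneg _) (Finset.mem_univ j)
  have := abs_nonneg x.2
  linarith

lemma abs_snd_le_Hnorm_sq {n : ℕ} (x : H n) : |x.2| ≤ Hnorm x ^ 2 := by
  rw [Hnorm_sq]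
  have := sum_normSq_nonneg x.1
  linarith

lemma Hnorm_le_norm {n : ℕ} (y : H n) :
    1 + Hnorm y ≤ (1 + Real.sqrt (n + 1)) * (1 + ‖y‖) := by
  have hy : (0:ℝ) ≤ ‖y‖ := norm_nonneg _
  have h1 : Hnorm y ≤ Real.sqrt (n + 1) * (1 + ‖y‖) := by
    have hsum : ∑ j, Complex.normSq (y.1 j) ≤ n * ‖y‖ ^ 2 := by
      have h := Finset.sum_le_card_nsmul Finset.univ (fun j => Complex.normSq (y.1 j))
        (‖y‖ ^ 2) (fun j _ => by
          have h1 : ‖y.1 j‖ ≤ ‖y‖ := (norm_le_pi_norm y.1 j).trans (norm_fst_le y)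
          have h2 : Complex.normSq (y.1 j) = ‖y.1 j‖ ^ 2 := by
            rw [Complex.sq_norm]
          show Complex.normSq (y.1 j) ≤ ‖y‖ ^ 2
          rw [h2]
          exact pow_le_pow_left₀ (norm_nonneg _) h1 2)
      simpa [Finset.card_univ, nsmul_eq_mul] using h
    have habs : |y.2| ≤ ‖y‖ := by
      have := norm_snd_le y
      rwa [Real.norm_eq_abs] at this
    have : Hnorm y ≤ Real.sqrt ((n + 1) * (1 + ‖y‖) ^ 2) := by
      apply Real.sqrt_le_sqrt
      nlinarith
    rwa [Real.sqrt_mul (by positivity), Real.sqrt_sq (by positivity)] at this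
  have hs : (0:ℝ) ≤ Real.sqrt (n + 1) := Real.sqrt_nonneg _
  nlinarith

lemma abs_im_sum_le {n : ℕ} (x x' : H n) :
    |(∑ j, x.1 j * conj (x'.1 j)).im| ≤ Hnorm x * Hnorm x' := by
  have h1 : |(∑ j, x.1 j * conj (x'.1 j)).im| ≤ ‖∑ j, x.1 j * conj (x'.1 j)‖ := by
    exact Complex.abs_im_le_norm _
  have h2 : ‖∑ j, x.1 j * conj (x'.1 j)‖ ≤ ∑ j, ‖x.1 j‖ * ‖x'.1 j‖ := by
    refine (norm_sum_le _ _).trans (le_of_eq (Finset.sum_congr rfl fun j _ => ?_))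
    rw [norm_mul, RCLike.norm_conj]
  set T := ∑ j, ‖x.1 j‖ * ‖x'.1 j‖ with hT
  have hT0 : 0 ≤ T := Finset.sum_nonneg fun j _ => mul_nonneg (norm_nonneg _) (norm_nonneg _)
  have h3 : T ^ 2 ≤ (Hnorm x * Hnorm x') ^ 2 := by
    have hcs := Finset.sum_mul_sq_le_sq_mul_sq Finset.univ (fun j => ‖x.1 j‖) (fun j => ‖x'.1 j‖)
    have e1 : ∑ j, ‖x.1 j‖ ^ 2 ≤ Hnorm x ^ 2 := by
      rw [Hnorm_sq]
      have h4 : ∑ j, ‖x.1 j‖ ^ 2 = ∑ j, Complex.normSq (x.1 j) :=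
        Finset.sum_congr rfl fun j _ => by rw [Complex.sq_norm]
      have := abs_nonneg x.2
      linarith
    have e2 : ∑ j, ‖x'.1 j‖ ^ 2 ≤ Hnorm x' ^ 2 := by
      rw [Hnorm_sq]
      have h4 : ∑ j, ‖x'.1 j‖ ^ 2 = ∑ j, Complex.normSq (x'.1 j) :=
        Finset.sum_congr rfl fun j _ => by rw [Complex.sq_norm]
      have := abs_nonneg x'.2
      linarith
    have hx0 : 0 ≤ ∑ j, ‖x.1 j‖ ^ 2 := Finset.sum_nonneg fun j _ => sq_nonneg _
    have hx'0 : 0 ≤ ∑ j, ‖x'.1 j‖ ^ 2 := Finset.sum_nonneg fun j _ => sq_nonneg _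
    calc T ^ 2 ≤ (∑ j, ‖x.1 j‖ ^ 2) * ∑ j, ‖x'.1 j‖ ^ 2 := hcs
      _ ≤ Hnorm x ^ 2 * Hnorm x' ^ 2 := by
          apply mul_le_mul e1 e2 hx'0 (sq_nonneg _)
      _ = (Hnorm x * Hnorm x') ^ 2 := by ring
  have h4 : T ≤ Hnorm x * Hnorm x' := by
    nlinarith [mul_nonneg (Hnorm_nonneg x) (Hnorm_nonneg x')]
  linarith

set_option maxHeartbeats 2000000 in
lemma key_diff (n : ℕ) (F : SchwartzMap (H n × ℝ) ℝ) (M B : ℕ) (hM : 1 ≤ M)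
    (γ : ℝ) (hγ : 1 < γ)
    (hγ' : ∀ x y : H n, Hnorm (Hmul x y) ≤ γ * (Hnorm x + Hnorm y)) :
    ∃ K, 0 ≤ K ∧ ∀ (x x' : H n) (s : ℝ),
      Hnorm x' ≤ 1 / (2 * γ) * (1 + Hnorm x) →
      |F (Hmul x (Hinv x'), s) - F (x, s)|
        ≤ K * Hnorm x' / (1 + Hnorm x) ^ M * (1 / (1 + |s|) ^ B) := by
  have hγ0 : (0:ℝ) < γ := by linarith
  set k := 2 * M + B with hk
  set D := 2 ^ k * (Finset.Iic ((k : ℕ), (1 : ℕ))).sup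
      (fun m => SchwartzMap.seminorm ℝ m.1 m.2) F with hD
  have hD0 : 0 ≤ D := by
    apply mul_nonneg (by positivity)
    exact apply_nonneg _ F
  set c := 2 * γ * (1 + Real.sqrt (n + 1)) with hc
  have hc0 : 0 < c := by
    have : (0:ℝ) ≤ Real.sqrt (n + 1) := Real.sqrt_nonneg _
    positivity
  refine ⟨3 * c ^ (2 * M) * D, by positivity, ?_⟩
  intro x x' s hx'
  set N := Hnorm x with hNdef
  set N' := Hnorm x' with hN'def
  have hN : 0 ≤ N := Hnorm_nonneg x
  have hN' : 0 ≤ N' := Hnorm_nonneg x'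
  have h1N : (0:ℝ) < 1 + N := by linarith
  have hN'leN : N' ≤ 1 + N := by
    have h12 : 1 / (2 * γ) ≤ 1 := by
      rw [div_le_one (by linarith)]; linarith
    nlinarith
  set a := Hmul x (Hinv x') with ha
  set Cb := c ^ (2 * M) * D / ((1 + N) ^ (2 * M) * (1 + |s|) ^ B) with hCb
  -- MVT on the segment from (x,s) to (a,s)
  have hdiff : ∀ p ∈ segment ℝ ((x, s) : H n × ℝ) ((a, s) : H n × ℝ),
      DifferentiableAt ℝ (⇑F) p := fun p _ => F.differentiable p
  have hbound : ∀ p ∈ segment ℝ ((x, s) : H n × ℝ) ((a, s) : H n × ℝ),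
      ‖fderiv ℝ (⇑F) p‖ ≤ Cb := by
    rintro p hp
    obtain ⟨u, v, hu, hv, huv, rfl⟩ := hp
    set y : H n := (fun j => (v : ℂ) * x'.1 j, v * x'.2) with hy
    set ξ : H n := Hmul x (Hinv y) with hξ
    have hp2 : (u • ((x, s) : H n × ℝ) + v • ((a, s) : H n × ℝ)).2 = s := by
      show u • s + v • s = s
      simp only [smul_eq_mul]
      rw [← add_mul, huv, one_mul]
    have huv' : (u : ℂ) + (v : ℂ) = 1 := by exact_mod_cast huv
    have hp1 : (u • ((x, s) : H n × ℝ) + v • ((a, s) : H n × ℝ)).1 = ξ := by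
      show u • x + v • a = ξ
      rw [ha, hξ, hy]
      unfold Hmul Hinv
      refine Prod.ext ?_ ?_
      · show u • x.1 + v • (x.1 + -x'.1) = x.1 + -(fun j => (v:ℂ) * x'.1 j)
        funext j
        simp only [Pi.add_apply, Pi.smul_apply, Pi.neg_apply, Complex.real_smul]
        linear_combination x.1 j * huv'
      · show u • (x.2 : ℝ) + v • (x.2 + -x'.2 + 2 * (∑ j, x.1 j * conj ((-x'.1) j)).im)
          = x.2 + -(v * x'.2) + 2 * (∑ j, x.1 j * conj ((-(fun j => (v:ℂ) * x'.1 j)) j)).im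
        have e1 : ∑ j, x.1 j * conj ((-x'.1) j) = -∑ j, x.1 j * conj (x'.1 j) := by
          simp [mul_neg]
        have e2 : ∑ j, x.1 j * conj ((-(fun j => (v:ℂ) * x'.1 j)) j)
            = -((v : ℂ) * ∑ j, x.1 j * conj (x'.1 j)) := by
          rw [Finset.mul_sum, ← Finset.sum_neg_distrib]
          refine Finset.sum_congr rfl fun j _ => ?_
          simp only [Pi.neg_apply, map_neg, map_mul, Complex.conj_ofReal]
          ring
        rw [e1, e2]
        simp only [smul_eq_mul, Complex.neg_im, Complex.im_ofReal_mul]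
        linear_combination x.2 * huv
    have hpeq : u • ((x, s) : H n × ℝ) + v • ((a, s) : H n × ℝ) = ((ξ, s) : H n × ℝ) :=
      Prod.ext hp1 hp2
    rw [hpeq]
    -- norm bounds at the point (ξ, s)
    have hv1 : v ≤ 1 := by linarith
    have hyN : Hnorm y ≤ N' := by
      rw [hN'def]
      unfold Hnorm
      apply Real.sqrt_le_sqrt
      have e3 : ∑ j, Complex.normSq (y.1 j) = v ^ 2 * ∑ j, Complex.normSq (x'.1 j) := by
        rw [Finset.mul_sum]
        refine Finset.sum_congr rfl fun j _ => ?_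
        show Complex.normSq ((v : ℂ) * x'.1 j) = v ^ 2 * Complex.normSq (x'.1 j)
        rw [map_mul, Complex.normSq_ofReal]
        ring
      have e4 : |y.2| = v * |x'.2| := by
        show |v * x'.2| = v * |x'.2|
        rw [abs_mul, _root_.abs_of_nonneg hv]
      rw [e3, e4]
      have hv2 : v ^ 2 ≤ 1 := by nlinarith
      nlinarith [mul_nonneg (sub_nonneg.mpr hv2) (sum_normSq_nonneg x'.1),
        mul_nonneg (sub_nonneg.mpr hv1) (abs_nonneg x'.2)]
    have hxiy : Hnorm x ≤ γ * (Hnorm ξ + Hnorm y) := by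
      have h := hγ' (Hmul x (Hinv y)) y
      rwa [Hmul_inv_cancel] at h
    have hγN' : γ * N' ≤ (1 + N) / 2 := by
      have := mul_le_mul_of_nonneg_left hx' (le_of_lt hγ0)
      calc γ * N' ≤ γ * (1 / (2 * γ) * (1 + N)) := this
        _ = (1 + N) / 2 := by field_simp
    have h1n : 1 + N ≤ 2 * γ * (1 + Hnorm ξ) := by
      have h5 : N ≤ γ * Hnorm ξ + γ * N' :=
        hxiy.trans (by nlinarith [Hnorm_nonneg ξ])
      nlinarith [Hnorm_nonneg ξ]
    have hEuc : 1 + N ≤ c * (1 + ‖ξ‖) := by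
      calc 1 + N ≤ 2 * γ * (1 + Hnorm ξ) := h1n
        _ ≤ 2 * γ * ((1 + Real.sqrt (n + 1)) * (1 + ‖ξ‖)) :=
            mul_le_mul_of_nonneg_left (Hnorm_le_norm ξ) (by linarith)
        _ = c * (1 + ‖ξ‖) := by rw [hc]; ring
    set p : H n × ℝ := (ξ, s) with hpdef
    have hp1' : ‖ξ‖ ≤ ‖p‖ := norm_fst_le p
    have hp2' : |s| ≤ ‖p‖ := by
      have := norm_snd_le p
      rwa [Real.norm_eq_abs] at this
    have hEuc' : 1 + N ≤ c * (1 + ‖p‖) := by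
      have h6 : c * (1 + ‖ξ‖) ≤ c * (1 + ‖p‖) :=
        mul_le_mul_of_nonneg_left (by linarith) hc0.le
      linarith
    have hs' : 1 + |s| ≤ 1 + ‖p‖ := by linarith
    have hSch := SchwartzMap.one_add_le_sup_seminorm_apply (𝕜 := ℝ)
      (m := ((k : ℕ), (1 : ℕ))) (le_refl k) (le_refl 1) F p
    have hfd : ‖fderiv ℝ (⇑F) p‖ = ‖iteratedFDeriv ℝ 1 (⇑F) p‖ := by
      rw [← norm_iteratedFDeriv_fderiv (n := 0), norm_iteratedFDeriv_zero]
    have hnp : (0:ℝ) ≤ ‖p‖ := norm_nonneg _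
    have hchain : (1 + N) ^ (2 * M) * (1 + |s|) ^ B * ‖fderiv ℝ (⇑F) p‖
        ≤ c ^ (2 * M) * D := by
      calc (1 + N) ^ (2 * M) * (1 + |s|) ^ B * ‖fderiv ℝ (⇑F) p‖
          ≤ (c * (1 + ‖p‖)) ^ (2 * M) * (1 + ‖p‖) ^ B * ‖fderiv ℝ (⇑F) p‖ := by
            gcongr <;> linarith
        _ = c ^ (2 * M) * ((1 + ‖p‖) ^ k * ‖iteratedFDeriv ℝ 1 (⇑F) p‖) := by
            rw [mul_pow, hfd, hk, pow_add]; ring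
        _ ≤ c ^ (2 * M) * D := by
            rw [hD]
            exact mul_le_mul_of_nonneg_left hSch (by positivity)
    rw [hCb, le_div_iff₀ (by positivity)]
    nlinarith [hchain]
  have hmvt := (convex_segment ((x, s) : H n × ℝ) ((a, s) : H n × ℝ)).norm_image_sub_le_of_norm_fderiv_le
    hdiff hbound (left_mem_segment ℝ _ _) (right_mem_segment ℝ _ _)
  have hsegnorm : ‖((a, s) : H n × ℝ) - ((x, s) : H n × ℝ)‖ = ‖a - x‖ := by
    have : ((a, s) : H n × ℝ) - ((x, s) : H n × ℝ) = ((a - x, 0) : H n × ℝ) := by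
      simp [Prod.ext_iff]
    rw [this, Prod.norm_def]
    simp [max_eq_left (norm_nonneg (a - x))]
  have hdist : ‖a - x‖ ≤ 3 * N' * (1 + N) := by
    have ha1 : a.1 - x.1 = -x'.1 := by
      rw [ha]; show x.1 + -x'.1 - x.1 = -x'.1; abel
    have ha2 : a.2 - x.2 = -x'.2 - 2 * (∑ j, x.1 j * conj (x'.1 j)).im := by
      rw [ha]
      show x.2 + -x'.2 + 2 * (∑ j, x.1 j * conj ((-x'.1) j)).im - x.2
        = -x'.2 - 2 * (∑ j, x.1 j * conj (x'.1 j)).im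
      have e1 : ∑ j, x.1 j * conj ((-x'.1) j) = -∑ j, x.1 j * conj (x'.1 j) := by
        simp [mul_neg]
      rw [e1, Complex.neg_im]
      ring
    rw [Prod.norm_def]
    apply max_le
    · have : (a - x).1 = -x'.1 := ha1
      rw [this, norm_neg]
      have := norm_fst_le_Hnorm x'
      nlinarith
    · have : (a - x).2 = -x'.2 - 2 * (∑ j, x.1 j * conj (x'.1 j)).im := ha2
      rw [this, Real.norm_eq_abs]
      have habs : |(-x'.2 - 2 * (∑ j, x.1 j * conj (x'.1 j)).im)|
          ≤ |x'.2| + 2 * |(∑ j, x.1 j * conj (x'.1 j)).im| := by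
        calc |(-x'.2 - 2 * (∑ j, x.1 j * conj (x'.1 j)).im)|
            ≤ |(-x'.2)| + |2 * (∑ j, x.1 j * conj (x'.1 j)).im| := abs_sub _ _
          _ = |x'.2| + 2 * |(∑ j, x.1 j * conj (x'.1 j)).im| := by
              rw [abs_neg, abs_mul]; norm_num
      have h1 := abs_snd_le_Hnorm_sq x'
      have h2 := abs_im_sum_le x x'
      nlinarith
  have hfinal : |(F (a, s) : ℝ) - F (x, s)| ≤ Cb * (3 * N' * (1 + N)) := by
    have : |(F (a, s) : ℝ) - F (x, s)| = ‖(F (a, s) : ℝ) - F (x, s)‖ :=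
      (Real.norm_eq_abs _).symm
    rw [this]
    calc ‖(F (a, s) : ℝ) - F (x, s)‖ ≤ Cb * ‖((a, s) : H n × ℝ) - ((x, s) : H n × ℝ)‖ := hmvt
      _ ≤ Cb * (3 * N' * (1 + N)) := by
          rw [hsegnorm]
          have hCb0 : 0 ≤ Cb := by rw [hCb]; positivity
          exact mul_le_mul_of_nonneg_left hdist hCb0
  refine hfinal.trans ?_
  have hpow : (1 + N) ^ (M + 1) ≤ (1 + N) ^ (2 * M) :=
    pow_le_pow_right₀ (by linarith) (by omega)
  have hfrac : (1 + N) / ((1 + N) ^ (2 * M) * (1 + |s|) ^ B)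
      ≤ 1 / ((1 + N) ^ M * (1 + |s|) ^ B) := by
    rw [div_le_div_iff₀ (by positivity) (by positivity)]
    calc (1 + N) * ((1 + N) ^ M * (1 + |s|) ^ B) = (1 + N) ^ (M + 1) * (1 + |s|) ^ B := by
          rw [pow_succ]; ring
      _ ≤ (1 + N) ^ (2 * M) * (1 + |s|) ^ B := by
          exact mul_le_mul_of_nonneg_right hpow (by positivity)
      _ = 1 * ((1 + N) ^ (2 * M) * (1 + |s|) ^ B) := by ring
  have e5 : Cb * (3 * N' * (1 + N))
      = (3 * c ^ (2 * M) * D * N') * ((1 + N) / ((1 + N) ^ (2 * M) * (1 + |s|) ^ B)) := by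
    rw [hCb]; ring
  have e6 : (3 * c ^ (2 * M) * D * N') * (1 / ((1 + N) ^ M * (1 + |s|) ^ B))
      = 3 * c ^ (2 * M) * D * N' / (1 + N) ^ M * (1 / (1 + |s|) ^ B) := by
    field_simp
  rw [e5, ← e6]
  exact mul_le_mul_of_nonneg_left hfrac (by positivity)

/-- double-difference estimate, regime |(z',u')| small, |r'| large. -/
theorem statement5 (n : ℕ) (F : SchwartzMap (H n × ℝ) ℝ) (L : ℕ) (hL : 0 < L)
    (γ : ℝ) (hγ : 1 < γ)
    (hγ' : ∀ x y : H n, Hnorm (Hmul x y) ≤ γ * (Hnorm x + Hnorm y)) :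
    ∃ C > 0, ∀ (x x' : H n) (r r' : ℝ),
      Hnorm x' ≤ 1 / (2 * γ) * (1 + Hnorm x) → |r'| ≥ 1 / 2 * (1 + |r|) →
      |F (Hmul x (Hinv x'), r - r') - F (x, r - r') - F (Hmul x (Hinv x'), r) + F (x, r)|
        ≤ C * Hnorm x' / (1 + Hnorm x) ^ (L + 2 * n + 2) *
          (1 / (1 + |r - r'|) ^ (L + 1) + 1 / (1 + |r|) ^ (L + 1)) := by
  obtain ⟨K, hK0, hK⟩ := key_diff n F (L + 2 * n + 2) (L + 1) (by omega) γ hγ hγ'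
  refine ⟨K + 1, by positivity, ?_⟩
  intro x x' r r' hx' _hr
  have hN : 0 ≤ Hnorm x := Hnorm_nonneg x
  have hN' : 0 ≤ Hnorm x' := Hnorm_nonneg x'
  have e : (F (Hmul x (Hinv x'), r - r') : ℝ) - F (x, r - r')
        - F (Hmul x (Hinv x'), r) + F (x, r)
      = ((F (Hmul x (Hinv x'), r - r') : ℝ) - F (x, r - r'))
        - ((F (Hmul x (Hinv x'), r) : ℝ) - F (x, r)) := by ring
  rw [e]
  have h1 := hK x x' (r - r') hx'
  have h2 := hK x x' r hx'
  calc |((F (Hmul x (Hinv x'), r - r') : ℝ) - F (x, r - r'))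
        - ((F (Hmul x (Hinv x'), r) : ℝ) - F (x, r))|
      ≤ |((F (Hmul x (Hinv x'), r - r') : ℝ) - F (x, r - r'))|
        + |((F (Hmul x (Hinv x'), r) : ℝ) - F (x, r))| := abs_sub _ _
    _ ≤ K * Hnorm x' / (1 + Hnorm x) ^ (L + 2 * n + 2) * (1 / (1 + |r - r'|) ^ (L + 1))
        + K * Hnorm x' / (1 + Hnorm x) ^ (L + 2 * n + 2) * (1 / (1 + |r|) ^ (L + 1)) :=
        add_le_add h1 h2
    _ = K * Hnorm x' / (1 + Hnorm x) ^ (L + 2 * n + 2) *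
          (1 / (1 + |r - r'|) ^ (L + 1) + 1 / (1 + |r|) ^ (L + 1)) := by ring
    _ ≤ (K + 1) * Hnorm x' / (1 + Hnorm x) ^ (L + 2 * n + 2) *
          (1 / (1 + |r - r'|) ^ (L + 1) + 1 / (1 + |r|) ^ (L + 1)) := by
        apply mul_le_mul_of_nonneg_right _ (by positivity)
        exact (div_le_div_iff_of_pos_right (by positivity)).mpr
          (mul_le_mul_of_nonneg_right (by linarith) hN')
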